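/- arXiv:1504.07837 — 2 statements merged into one kernel-verified Lean document; each statement's English description precedes it below -/
import Mathlib

section
/- Let $\eta > 0$ and $0 < \rho \le \eta$, and set $K_{\pm}(\alpha) = \frac{\sin(\pi\alpha\rho)\sin(\pi\alpha(2\eta\pm\rho))}{\pi^2\alpha^2\rho}$. Then for every real $t$, $0 \le \int_{\mathbb{R}} e(\alpha t) K_{-}(\alpha)\, d\alpha \le U_\eta(t) \le \int_{\mathbb{R}} e(\alpha t) K_{+}(\alpha)\, d\alpha \le 1$, where $U_\eta(t) = 1$ if $|t| < \eta$ and $U_\eta(t) = 0$ if $|t| \ge \eta$, and $e(x) = e^{2\pi i x}$. -/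
open Real MeasureTheory intervalIntegral FourierTransform

noncomputable def trap (A ρ x : ℝ) : ℝ := max 0 (min 1 ((A - |x|)/ρ))

lemma trap_continuous (A ρ : ℝ) : Continuous (trap A ρ) :=
  continuous_const.max (continuous_const.min ((continuous_const.sub continuous_abs).div_const ρ))

lemma trap_nonneg (A ρ x : ℝ) : 0 ≤ trap A ρ x := le_max_left _ _

lemma trap_le_one (A ρ x : ℝ) : trap A ρ x ≤ 1 :=
  max_le zero_le_one (min_le_left _ _)

lemma trap_eq_zero (A ρ x : ℝ) (hρ : 0 < ρ) (h : A ≤ |x|) : trap A ρ x = 0 := by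
  have : (A - |x|)/ρ ≤ 0 := div_nonpos_of_nonpos_of_nonneg (by linarith) hρ.le
  exact max_eq_left ((min_le_right _ _).trans this)

lemma trap_eq_one (A ρ x : ℝ) (hρ : 0 < ρ) (h : |x| ≤ A - ρ) : trap A ρ x = 1 := by
  have h1 : (1:ℝ) ≤ (A - |x|)/ρ := (one_le_div hρ).2 (by linarith)
  unfold trap
  rw [min_eq_left h1]
  exact max_eq_right zero_le_one

lemma trap_eq_lin (A ρ x : ℝ) (hρ : 0 < ρ) (h1 : A - ρ ≤ |x|) (h2 : |x| ≤ A) :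
    trap A ρ x = (A - |x|)/ρ := by
  have ha : (A - |x|)/ρ ≤ 1 := (div_le_one hρ).2 (by linarith)
  have hb : 0 ≤ (A - |x|)/ρ := div_nonneg (by linarith) hρ.le
  unfold trap
  rw [min_eq_right ha, max_eq_right hb]

lemma hasDerivAt_cexp_lin (c : ℂ) (x : ℝ) :
    HasDerivAt (fun y : ℝ => Complex.exp (c * y)) (c * Complex.exp (c * x)) x := by
  have h1 : HasDerivAt (fun y : ℝ => c * (y : ℂ)) c x :=
    (Complex.ofRealCLM.hasDerivAt.const_mul c).congr_deriv (by simp)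
  simpa [mul_comm, Function.comp_def] using (Complex.hasDerivAt_exp (c * x)).comp x h1

lemma lin_exp_integral (c : ℂ) (hc : c ≠ 0) (p q : ℂ) (u v : ℝ) :
    ∫ x : ℝ in u..v, (p + q * x) * Complex.exp (c * x) =
      (((p + q * v) * c - q) * Complex.exp (c * v)
        - ((p + q * u) * c - q) * Complex.exp (c * u)) / c ^ 2 := by
  have h : ∀ x ∈ Set.uIcc u v, HasDerivAt
      (fun y : ℝ => ((p + q * y) * c - q) * Complex.exp (c * y) / c ^ 2)
      ((p + q * x) * Complex.exp (c * x)) x := by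
    intro x _
    have he := hasDerivAt_cexp_lin c x
    have hl : HasDerivAt (fun y : ℝ => (p + q * (y : ℂ)) * c - q) (q * c) x := by
      have : HasDerivAt (fun y : ℝ => p + q * (y : ℂ)) q x :=
        ((Complex.ofRealCLM.hasDerivAt.const_mul q).const_add p).congr_deriv (by simp)
      simpa using (this.mul_const c).sub_const q
    have := (hl.mul he).div_const (c ^ 2)
    refine this.congr_deriv ?_
    rw [div_eq_iff (pow_ne_zero 2 hc)]
    ring
  have hcont : IntervalIntegrable (fun x : ℝ => (p + q * x) * Complex.exp (c * x)) volume u v := by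
    apply Continuous.intervalIntegrable
    exact (continuous_const.add (continuous_const.mul Complex.continuous_ofReal)).mul
      (Complex.continuous_exp.comp (continuous_const.mul Complex.continuous_ofReal))
  rw [integral_eq_sub_of_hasDerivAt h hcont]
  ring

lemma exp_add_exp_neg (θ : ℝ) :
    Complex.exp ((θ:ℂ) * Complex.I) + Complex.exp (-(θ:ℂ) * Complex.I)
      = ((2 * Real.cos θ : ℝ) : ℂ) := by
  rw [Complex.exp_mul_I, Complex.exp_mul_I, Complex.cos_neg, Complex.sin_neg,
    ← Complex.ofReal_cos]
  push_cast
  ring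

lemma lin_integral (p q : ℂ) (u v : ℝ) :
    ∫ x : ℝ in u..v, (p + q * x) = p * (v - u) + q * ((v^2 - u^2)/2) := by
  have h1 : IntervalIntegrable (fun _ : ℝ => p) volume u v := intervalIntegrable_const
  have h2 : IntervalIntegrable (fun x : ℝ => q * (x:ℂ)) volume u v :=
    (continuous_const.mul Complex.continuous_ofReal).intervalIntegrable u v
  rw [integral_add h1 h2, intervalIntegral.integral_const, intervalIntegral.integral_const_mul]
  have h3 : ∫ x : ℝ in u..v, ((x:ℝ):ℂ) = (((v^2-u^2)/2 : ℝ) : ℂ) := by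
    rw [intervalIntegral.integral_ofReal, integral_id]
  rw [h3, Complex.real_smul]
  push_cast
  ring

lemma fourier_trap (B ρ : ℝ) (hρ : 0 < ρ) (hB : 0 ≤ B) (ξ : ℝ) :
    𝓕 (fun x : ℝ => (trap (B + ρ) ρ x : ℂ)) ξ =
      ((if ξ = 0 then 2*B+ρ
        else Real.sin (π*ξ*ρ) * Real.sin (π*ξ*(2*B+ρ)) / (π^2*ξ^2*ρ) : ℝ) : ℂ) := by
  set A := B + ρ with hA
  have hπ : (π : ℝ) ≠ 0 := Real.pi_ne_zero
  have hρ0 : (ρ : ℝ) ≠ 0 := hρ.ne'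
  obtain ⟨c, hc_def⟩ : ∃ c : ℂ, c = ((-2*π*ξ : ℝ) : ℂ) * Complex.I := ⟨_, rfl⟩
  have hrepr : 𝓕 (fun x : ℝ => (trap A ρ x : ℂ)) ξ
      = ∫ v : ℝ, (trap A ρ v : ℂ) * Complex.exp (c * v) := by
    rw [Real.fourier_eq']
    congr 1; funext v
    rw [smul_eq_mul, mul_comm]
    congr 2
    rw [hc_def]
    simp only [RCLike.inner_apply, conj_trivial]
    push_cast
    ring
  rw [hrepr]
  have hA0 : 0 < A := by positivity
  have hsupp : ∀ x : ℝ, x ∉ Set.Ioc (-A) A → (trap A ρ x : ℂ) * Complex.exp (c * x) = 0 := by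
    intro x hx
    have habs : A ≤ |x| := by
      by_contra h
      push_neg at h
      rw [abs_lt] at h
      exact hx (Set.mem_Ioc.mpr ⟨h.1, h.2.le⟩)
    rw [trap_eq_zero _ _ _ hρ habs]
    simp
  have hcont : ∀ u w : ℝ, IntervalIntegrable
      (fun v : ℝ => (trap A ρ v : ℂ) * Complex.exp (c * v)) volume u w := by
    intro u w
    apply Continuous.intervalIntegrable
    exact (Complex.continuous_ofReal.comp (trap_continuous A ρ)).mul
      (Complex.continuous_exp.comp (continuous_const.mul Complex.continuous_ofReal))
  have hstep : (∫ v : ℝ, (trap A ρ v : ℂ) * Complex.exp (c * v))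
      = (∫ v in (-A)..(-B), (trap A ρ v : ℂ) * Complex.exp (c * v))
      + (∫ v in (-B)..B, (trap A ρ v : ℂ) * Complex.exp (c * v))
      + (∫ v in B..A, (trap A ρ v : ℂ) * Complex.exp (c * v)) := by
    rw [← setIntegral_eq_integral_of_forall_compl_eq_zero hsupp,
      ← intervalIntegral.integral_of_le (by linarith : -A ≤ A),
      ← integral_add_adjacent_intervals (hcont (-A) B) (hcont B A),
      ← integral_add_adjacent_intervals (hcont (-A) (-B)) (hcont (-B) B)]
  rw [hstep]
  have p1 : (∫ v in (-A)..(-B), (trap A ρ v : ℂ) * Complex.exp (c * v))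
      = ∫ v in (-A)..(-B), (((A/ρ : ℝ) : ℂ) + ((1/ρ : ℝ) : ℂ) * v) * Complex.exp (c * v) := by
    apply intervalIntegral.integral_congr
    intro x hx
    rw [Set.uIcc_of_le (by linarith : -A ≤ -B)] at hx
    obtain ⟨h1, h2⟩ := hx
    dsimp only
    have habs : |x| = -x := abs_of_nonpos (by linarith)
    rw [trap_eq_lin _ _ _ hρ (by rw [habs]; linarith) (by rw [habs]; linarith)]
    congr 1
    rw [habs]
    push_cast
    ring
  have p2 : (∫ v in (-B)..B, (trap A ρ v : ℂ) * Complex.exp (c * v))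
      = ∫ v in (-B)..B, ((1:ℂ) + (0:ℂ) * v) * Complex.exp (c * v) := by
    apply intervalIntegral.integral_congr
    intro x hx
    rw [Set.uIcc_of_le (by linarith : -B ≤ B)] at hx
    obtain ⟨h1, h2⟩ := hx
    dsimp only
    rw [trap_eq_one _ _ _ hρ (abs_le.mpr ⟨by linarith, by linarith⟩)]
    norm_num
  have p3 : (∫ v in B..A, (trap A ρ v : ℂ) * Complex.exp (c * v))
      = ∫ v in B..A, (((A/ρ : ℝ) : ℂ) + ((-(1/ρ) : ℝ) : ℂ) * v) * Complex.exp (c * v) := by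
    apply intervalIntegral.integral_congr
    intro x hx
    rw [Set.uIcc_of_le (by linarith : B ≤ A)] at hx
    obtain ⟨h1, h2⟩ := hx
    dsimp only
    have habs : |x| = x := abs_of_nonneg (by linarith)
    rw [trap_eq_lin _ _ _ hρ (by rw [habs]; linarith) (by rw [habs]; linarith)]
    congr 1
    rw [habs]
    push_cast
    ring
  rw [p1, p2, p3]
  by_cases hξ : ξ = 0
  · subst hξ
    rw [if_pos rfl]
    have hc0 : c = 0 := by rw [hc_def]; norm_num
    simp only [hc0, zero_mul, Complex.exp_zero, mul_one, add_zero]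
    rw [intervalIntegral.integral_const, lin_integral, lin_integral, Complex.real_smul]
    have hρC : ((ρ:ℝ):ℂ) ≠ 0 := Complex.ofReal_ne_zero.mpr hρ0
    push_cast [hA]
    field_simp
    ring
  · have hξR : (-2*π*ξ : ℝ) ≠ 0 :=
      mul_ne_zero (mul_ne_zero (by norm_num) hπ) hξ
    have hc0 : c ≠ 0 := by
      rw [hc_def]
      exact mul_ne_zero (Complex.ofReal_ne_zero.mpr hξR) Complex.I_ne_zero
    rw [lin_exp_integral c hc0, lin_exp_integral c hc0, lin_exp_integral c hc0, if_neg hξ]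
    have hEA : Complex.exp (c * ((A:ℝ):ℂ)) + Complex.exp (c * ((-A : ℝ):ℂ))
        = ((2 * Real.cos (2*π*ξ*A) : ℝ) : ℂ) := by
      have h1 : c * ((A:ℝ):ℂ) = -((2*π*ξ*A : ℝ):ℂ) * Complex.I := by
        rw [hc_def]; push_cast; ring
      have h2 : c * ((-A : ℝ):ℂ) = ((2*π*ξ*A : ℝ):ℂ) * Complex.I := by
        rw [hc_def]; push_cast; ring
      rw [h1, h2, add_comm]
      exact exp_add_exp_neg _
    have hEB : Complex.exp (c * ((B:ℝ):ℂ)) + Complex.exp (c * ((-B : ℝ):ℂ))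
        = ((2 * Real.cos (2*π*ξ*B) : ℝ) : ℂ) := by
      have h1 : c * ((B:ℝ):ℂ) = -((2*π*ξ*B : ℝ):ℂ) * Complex.I := by
        rw [hc_def]; push_cast; ring
      have h2 : c * ((-B : ℝ):ℂ) = ((2*π*ξ*B : ℝ):ℂ) * Complex.I := by
        rw [hc_def]; push_cast; ring
      rw [h1, h2, add_comm]
      exact exp_add_exp_neg _
    have hρC : ((ρ:ℝ):ℂ) ≠ 0 := Complex.ofReal_ne_zero.mpr hρ0
    have hAc : ((A:ℝ):ℂ) = ((B:ℝ):ℂ) + ((ρ:ℝ):ℂ) := by rw [hA]; push_cast; ring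
    trans ((Complex.exp (c * ((A:ℝ):ℂ)) + Complex.exp (c * ((-A:ℝ):ℂ))
        - (Complex.exp (c * ((B:ℝ):ℂ)) + Complex.exp (c * ((-B:ℝ):ℂ)))) / (((ρ:ℝ):ℂ) * c^2))
    · rw [← add_div, ← add_div,
        div_eq_div_iff (pow_ne_zero 2 hc0) (mul_ne_zero hρC (pow_ne_zero 2 hc0))]
      push_cast
      rw [show ((A:ℝ):ℂ) = ((B:ℝ):ℂ) + ((ρ:ℝ):ℂ) from hAc]
      field_simp
      ring
    · rw [hEA, hEB]
      have hden : (((ρ:ℝ):ℂ) * c^2) = ((-(4*π^2*ξ^2*ρ) : ℝ) : ℂ) := by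
        rw [hc_def]
        have : (((-2*π*ξ : ℝ) : ℂ) * Complex.I)^2 = (((-2*π*ξ:ℝ):ℂ))^2 * Complex.I^2 := by ring
        rw [this, Complex.I_sq]
        push_cast
        ring
      rw [hden, ← Complex.ofReal_sub, ← Complex.ofReal_div, Complex.ofReal_inj]
      have hcc := Real.cos_sub_cos (2*π*ξ*A) (2*π*ξ*B)
      rw [show (2*π*ξ*A + 2*π*ξ*B)/2 = π*ξ*(2*B+ρ) by rw [hA]; ring,
        show (2*π*ξ*A - 2*π*ξ*B)/2 = π*ξ*ρ by rw [hA]; ring] at hcc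
      field_simp
      linear_combination (-2) * hcc

lemma trap_integrable (B ρ : ℝ) (hρ : 0 < ρ) (hB : 0 ≤ B) :
    Integrable (fun x : ℝ => (trap (B + ρ) ρ x : ℂ)) := by
  apply Continuous.integrable_of_hasCompactSupport
  · exact Complex.continuous_ofReal.comp (trap_continuous _ _)
  · apply HasCompactSupport.intro (isCompact_Icc (a := -(B+ρ)) (b := B+ρ))
    intro x hx
    have habs : B + ρ ≤ |x| := by
      by_contra h
      push_neg at h
      rw [abs_lt] at h
      exact hx (Set.mem_Icc.mpr ⟨h.1.le, h.2.le⟩)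
    rw [trap_eq_zero _ _ _ hρ habs]
    simp

lemma kernel_integrable (B ρ : ℝ) (hρ : 0 < ρ) (hB : 0 ≤ B) :
    Integrable (fun ξ : ℝ => (if ξ = 0 then 2*B+ρ
      else Real.sin (π*ξ*ρ) * Real.sin (π*ξ*(2*B+ρ)) / (π^2*ξ^2*ρ) : ℝ)) := by
  set K : ℝ → ℝ := fun ξ => (if ξ = 0 then 2*B+ρ
      else Real.sin (π*ξ*ρ) * Real.sin (π*ξ*(2*B+ρ)) / (π^2*ξ^2*ρ) : ℝ) with hKdef
  have hπ : (0:ℝ) < π := Real.pi_pos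
  have hL : 0 < 2*B+ρ := by linarith
  have hcontF : Continuous (𝓕 (fun x : ℝ => (trap (B + ρ) ρ x : ℂ))) :=
    VectorFourier.fourierIntegral_continuous Real.continuous_fourierChar
      (innerSL ℝ).continuous₂ (trap_integrable B ρ hρ hB)
  have hKcont : Continuous K := by
    have hfun : K = fun ξ =>
        (𝓕 (fun x : ℝ => (trap (B + ρ) ρ x : ℂ)) ξ).re := by
      funext ξ
      rw [fourier_trap B ρ hρ hB ξ, Complex.ofReal_re]
    rw [hfun]
    exact Complex.continuous_re.comp hcontF
  set C : ℝ := (2*B+ρ) + 1/(π^2*ρ) with hCdef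
  have hbound : ∀ ξ : ℝ, ‖K ξ‖ ≤ C * (1 + ξ^2)⁻¹ := by
    intro ξ
    have h1ξ : (0:ℝ) < 1 + ξ^2 := by positivity
    rw [← div_eq_mul_inv, le_div_iff₀ h1ξ]
    by_cases hξ : ξ = 0
    · subst hξ
      simp only [hKdef, if_pos rfl]
      rw [Real.norm_eq_abs, abs_of_nonneg hL.le, hCdef]
      have h9 : (0:ℝ) < 1/(π^2*ρ) := by positivity
      norm_num
      positivity
    · have hKval : K ξ = Real.sin (π*ξ*ρ) * Real.sin (π*ξ*(2*B+ρ)) / (π^2*ξ^2*ρ) := by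
        simp only [hKdef, if_neg hξ]
      have hξ2 : (0:ℝ) < ξ^2 := by positivity
      have hden : (0:ℝ) < π^2*ξ^2*ρ := by positivity
      have habs : |K ξ| = |Real.sin (π*ξ*ρ)| * |Real.sin (π*ξ*(2*B+ρ))| / (π^2*ξ^2*ρ) := by
        rw [hKval, abs_div, abs_mul, abs_of_pos hden]
      have hs1 : |Real.sin (π*ξ*ρ)| ≤ |π*ξ*ρ| := Real.abs_sin_le_abs
      have hs2 : |Real.sin (π*ξ*(2*B+ρ))| ≤ |π*ξ*(2*B+ρ)| := Real.abs_sin_le_abs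
      have hs1' : |Real.sin (π*ξ*ρ)| ≤ 1 := Real.abs_sin_le_one _
      have hs2' : |Real.sin (π*ξ*(2*B+ρ))| ≤ 1 := Real.abs_sin_le_one _
      have hb1 : |K ξ| ≤ 2*B+ρ := by
        rw [habs, div_le_iff₀ hden]
        calc |Real.sin (π*ξ*ρ)| * |Real.sin (π*ξ*(2*B+ρ))| ≤ |π*ξ*ρ| * |π*ξ*(2*B+ρ)| :=
              mul_le_mul hs1 hs2 (abs_nonneg _) (abs_nonneg _)
          _ = (2*B+ρ) * (π^2*ξ^2*ρ) := by
              rw [abs_mul, abs_mul, abs_mul, abs_mul, abs_of_pos hπ, abs_of_pos hρ,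
                abs_of_pos hL,
                show π * |ξ| * ρ * (π * |ξ| * (2*B+ρ)) = π^2 * (|ξ| * |ξ|) * ρ * (2*B+ρ) from by ring,
                abs_mul_abs_self]
              ring
      have hb2 : |K ξ| ≤ 1/(π^2*ξ^2*ρ) := by
        rw [habs, div_le_div_iff₀ hden hden]
        nlinarith [mul_le_mul hs1' hs2' (abs_nonneg _) zero_le_one, hden]
      have hmul : ξ^2 * (1/(π^2*ξ^2*ρ)) = 1/(π^2*ρ) := by
        field_simp
      rw [Real.norm_eq_abs]
      calc |K ξ| * (1 + ξ^2) = |K ξ| + |K ξ| * ξ^2 := by ring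
        _ ≤ (2*B+ρ) + (1/(π^2*ξ^2*ρ)) * ξ^2 :=
            add_le_add hb1 (mul_le_mul_of_nonneg_right hb2 hξ2.le)
        _ = C := by rw [hCdef, ← hmul]; ring
  exact (integrable_inv_one_add_sq.const_mul C).mono'
    hKcont.aestronglyMeasurable (Filter.Eventually.of_forall hbound)

lemma key_eval (B ρ : ℝ) (hρ : 0 < ρ) (hB : 0 ≤ B) (t : ℝ) :
    (∫ α : ℝ, Complex.exp (2*π*Complex.I*α*t) *
      ((if α = 0 then 2*B+ρ
        else Real.sin (π*α*ρ) * Real.sin (π*α*(2*B+ρ)) / (π^2*α^2*ρ) : ℝ) : ℂ))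
      = ((trap (B+ρ) ρ t : ℝ) : ℂ) := by
  have hTint := trap_integrable B ρ hρ hB
  have hK : 𝓕 (fun x : ℝ => (trap (B+ρ) ρ x : ℂ))
      = fun ξ : ℝ => ((if ξ = 0 then 2*B+ρ
        else Real.sin (π*ξ*ρ) * Real.sin (π*ξ*(2*B+ρ)) / (π^2*ξ^2*ρ) : ℝ) : ℂ) :=
    funext (fourier_trap B ρ hρ hB)
  have hKint : Integrable (𝓕 (fun x : ℝ => (trap (B+ρ) ρ x : ℂ))) := by
    rw [hK]
    exact (kernel_integrable B ρ hρ hB).ofReal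
  have hinv := hTint.fourierInv_fourier_eq hKint
    ((Complex.continuous_ofReal.comp (trap_continuous (B+ρ) ρ)).continuousAt (x := t))
  rw [Real.fourierInv_eq', hK] at hinv
  rw [← hinv]
  congr 1
  funext α
  rw [smul_eq_mul]
  congr 2
  simp only [RCLike.inner_apply, conj_trivial]
  push_cast
  ring

/-- Freeman's kernel: `s = 1` gives `K₊`, `s = -1` gives `K₋`. -/
noncomputable def freemanKernel (η ρ s : ℝ) (α : ℝ) : ℝ :=
  if α = 0 then 2 * η + s * ρ
  else Real.sin (π * α * ρ) * Real.sin (π * α * (2 * η + s * ρ)) / (π ^ 2 * α ^ 2 * ρ)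

theorem freeman_kernel_sandwich (η ρ : ℝ) (hη : 0 < η) (hρ : 0 < ρ) (hρη : ρ ≤ η) (t : ℝ) :
    (∫ α : ℝ, Complex.exp (2 * π * Complex.I * α * t) * (freemanKernel η ρ (-1) α : ℂ)).im = 0 ∧
    (∫ α : ℝ, Complex.exp (2 * π * Complex.I * α * t) * (freemanKernel η ρ 1 α : ℂ)).im = 0 ∧
    0 ≤ (∫ α : ℝ, Complex.exp (2 * π * Complex.I * α * t) * (freemanKernel η ρ (-1) α : ℂ)).re ∧
    (∫ α : ℝ, Complex.exp (2 * π * Complex.I * α * t) * (freemanKernel η ρ (-1) α : ℂ)).re ≤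
      (if |t| < η then 1 else 0) ∧
    (if |t| < η then (1:ℝ) else 0) ≤
      (∫ α : ℝ, Complex.exp (2 * π * Complex.I * α * t) * (freemanKernel η ρ 1 α : ℂ)).re ∧
    (∫ α : ℝ, Complex.exp (2 * π * Complex.I * α * t) * (freemanKernel η ρ 1 α : ℂ)).re ≤ 1 := by
  have hm : (∫ α : ℝ, Complex.exp (2 * π * Complex.I * α * t) * (freemanKernel η ρ (-1) α : ℂ))
      = ((trap η ρ t : ℝ) : ℂ) := by
    have e1 : ∀ α : ℝ, (freemanKernel η ρ (-1) α : ℝ)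
        = (if α = 0 then 2*(η-ρ)+ρ
          else Real.sin (π*α*ρ) * Real.sin (π*α*(2*(η-ρ)+ρ)) / (π^2*α^2*ρ)) := by
      intro α
      rw [show (2*(η-ρ)+ρ : ℝ) = 2*η + (-1)*ρ from by ring]
      rfl
    have := key_eval (η - ρ) ρ hρ (by linarith) t
    rw [show (η - ρ + ρ : ℝ) = η from by ring] at this
    rw [← this]
    congr 1
    funext α
    rw [e1]
  have hp : (∫ α : ℝ, Complex.exp (2 * π * Complex.I * α * t) * (freemanKernel η ρ 1 α : ℂ))
      = ((trap (η + ρ) ρ t : ℝ) : ℂ) := by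
    have e1 : ∀ α : ℝ, (freemanKernel η ρ 1 α : ℝ)
        = (if α = 0 then 2*η+ρ
          else Real.sin (π*α*ρ) * Real.sin (π*α*(2*η+ρ)) / (π^2*α^2*ρ)) := by
      intro α
      rw [show (2*η+ρ : ℝ) = 2*η + 1*ρ from by ring]
      rfl
    have := key_eval η ρ hρ hη.le t
    rw [← this]
    congr 1
    funext α
    rw [e1]
  rw [hm, hp]
  refine ⟨Complex.ofReal_im _, Complex.ofReal_im _, ?_, ?_, ?_, ?_⟩
  · rw [Complex.ofReal_re]; exact trap_nonneg _ _ _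
  · rw [Complex.ofReal_re]
    split_ifs with h
    · exact trap_le_one _ _ _
    · push_neg at h
      exact (trap_eq_zero η ρ t hρ h).le
  · rw [Complex.ofReal_re]
    split_ifs with h
    · exact (trap_eq_one (η+ρ) ρ t hρ (by linarith [h])).ge
    · exact trap_nonneg _ _ _
  · rw [Complex.ofReal_re]; exact trap_le_one _ _ _
end

section
/- Let $r \le n$ and let $\Lambda$ be an $n \times r$ real matrix of full rank $r$ such that $\Lambda\boldsymbol{\alpha} \notin \mathbb{Q}^n$ for every $\boldsymbol{\alpha} \in \mathbb{R}^r \setminus \{\mathbf{0}\}$. For $P \ge 1$ and $\boldsymbol{\alpha} \in \mathbb{R}^r$, define $\mathcal{F}(\boldsymbol{\alpha}; P) = \sup_{q \in \mathbb{N}, \mathbf{a} \in \mathbb{Z}^n} \prod_{v=1}^n (q + P|q\lambda_v - a_v|)^{-1}$, where $\boldsymbol{\lambda} = \Lambda\boldsymbol{\alpha}$. Then for any $0 < V \le W$, $\sup_{V \le |\Lambda\boldsymbol{\alpha}| \le W} \mathcal{F}(\boldsymbol{\alpha}; P) \to 0$ as $P \to \infty$. -/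
open Filter

/-- The Bentkus–Götze–Freeman function `𝓕(α; P)`, a supremum over `q ∈ ℕ` and `a ∈ ℤⁿ`
of `∏ᵥ (q + P|qλᵥ - aᵥ|)⁻¹` where `λ = Λα`. -/
noncomputable def calF (n : ℕ) (lam : Fin n → ℝ) (P : ℝ) : ℝ :=
  ⨆ (q : ℕ+) (a : Fin n → ℤ),
    ∏ v : Fin n, ((q : ℝ) + P * |(q : ℝ) * lam v - (a v : ℝ)|)⁻¹

/-- If one factor is at least `M` and all factors are at least `1`, the product of
inverses is at most `M⁻¹`. -/
lemma bgf_prod_inv_le {n : ℕ} (P : ℝ) (hP : 0 ≤ P) (q : ℕ+) (lam : Fin n → ℝ)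
    (a : Fin n → ℤ) (v₀ : Fin n) (M : ℝ) (hM : 0 < M)
    (h : M ≤ (q : ℝ) + P * |(q : ℝ) * lam v₀ - (a v₀ : ℝ)|) :
    ∏ v : Fin n, ((q : ℝ) + P * |(q : ℝ) * lam v - (a v : ℝ)|)⁻¹ ≤ M⁻¹ := by
  have h1 : ∀ v : Fin n, (1 : ℝ) ≤ (q : ℝ) + P * |(q : ℝ) * lam v - (a v : ℝ)| := by
    intro v
    have hq1 : (1 : ℝ) ≤ (q : ℝ) := by exact_mod_cast q.one_le
    have := mul_nonneg hP (abs_nonneg ((q : ℝ) * lam v - (a v : ℝ)))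
    linarith
  have hle : M ≤ ∏ v : Fin n, ((q : ℝ) + P * |(q : ℝ) * lam v - (a v : ℝ)|) := by
    have hM' : M = ∏ v : Fin n, (if v = v₀ then M else 1) := by
      rw [Finset.prod_ite_eq' Finset.univ v₀ (fun _ => M)]
      simp
    rw [hM']
    apply Finset.prod_le_prod
    · intro v _
      by_cases hv : v = v₀ <;> simp [hv] <;> positivity
    · intro v _
      by_cases hv : v = v₀
      · subst hv; simpa using h
      · simpa [hv] using h1 v
  calc ∏ v : Fin n, ((q : ℝ) + P * |(q : ℝ) * lam v - (a v : ℝ)|)⁻¹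
      = (∏ v : Fin n, ((q : ℝ) + P * |(q : ℝ) * lam v - (a v : ℝ)|))⁻¹ :=
        Finset.prod_inv_distrib _
    _ ≤ M⁻¹ := inv_anti₀ hM hle

set_option maxHeartbeats 1000000 in
theorem bentkus_goetze_freeman (n r : ℕ) (hr : 0 < r) (hrn : r ≤ n)
    (Λ : Matrix (Fin n) (Fin r) ℝ) (hrank : Λ.rank = r)
    (hirr : ∀ α : Fin r → ℝ, α ≠ 0 → ¬ (∀ i : Fin n, ∃ q : ℚ, Λ.mulVec α i = q))
    (V W : ℝ) (hV : 0 < V) (hVW : V ≤ W) :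
    Tendsto
      (fun P : ℝ =>
        ⨆ α : {α : Fin r → ℝ // V ≤ ‖Λ.mulVec α‖ ∧ ‖Λ.mulVec α‖ ≤ W},
          calF n (Λ.mulVec α.val) P)
      atTop (nhds 0) := by
  have hn : 0 < n := lt_of_lt_of_le hr hrn
  have hW : 0 < W := lt_of_lt_of_le hV hVW
  rw [Metric.tendsto_atTop]
  intro ε hε
  have hε2 : 0 < ε / 2 := by linarith
  -- the compact set of relevant triples (q, λ, a)
  set C : Set (ℝ × (Fin n → ℝ) × (Fin n → ℝ)) :=
    {p | (∃ m : ℤ, p.1 = (m : ℝ)) ∧ 1 ≤ p.1 ∧ p.1 ≤ (ε / 2)⁻¹ ∧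
         p.2.1 ∈ Set.range Λ.mulVec ∧ V ≤ ‖p.2.1‖ ∧ ‖p.2.1‖ ≤ W ∧
         (∀ v, ∃ m : ℤ, p.2.2 v = (m : ℝ)) ∧
         (∀ v, |p.2.2 v| ≤ (ε / 2)⁻¹ * W + 1)} with hCdef
  -- the distance ‖q•λ - a‖ is bounded below by a positive δ on C
  obtain ⟨δ, hδ, hδC⟩ : ∃ δ > 0, ∀ p ∈ C, δ ≤ ‖p.1 • p.2.1 - p.2.2‖ := by
    rcases Set.eq_empty_or_nonempty C with hC | hC
    · exact ⟨1, one_pos, fun p hp => by rw [hC] at hp; exact absurd hp (Set.notMem_empty p)⟩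
    · have hclosed : IsClosed C := by
        have e1 : IsClosed {p : ℝ × (Fin n → ℝ) × (Fin n → ℝ) | ∃ m : ℤ, p.1 = (m : ℝ)} := by
          have : {p : ℝ × (Fin n → ℝ) × (Fin n → ℝ) | ∃ m : ℤ, p.1 = (m : ℝ)}
              = Prod.fst ⁻¹' (Set.range ((↑) : ℤ → ℝ)) := by
            ext p; simp [eq_comm]
          rw [this]
          exact Int.isClosedEmbedding_coe_real.isClosed_range.preimage continuous_fst
        have e2 : IsClosed {p : ℝ × (Fin n → ℝ) × (Fin n → ℝ) | 1 ≤ p.1} :=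
          isClosed_le continuous_const continuous_fst
        have e3 : IsClosed {p : ℝ × (Fin n → ℝ) × (Fin n → ℝ) | p.1 ≤ (ε / 2)⁻¹} :=
          isClosed_le continuous_fst continuous_const
        have e4 : IsClosed {p : ℝ × (Fin n → ℝ) × (Fin n → ℝ) | p.2.1 ∈ Set.range Λ.mulVec} := by
          have hr : Set.range Λ.mulVec
              = (LinearMap.range (Matrix.mulVecLin Λ) : Submodule ℝ (Fin n → ℝ)) := by
            ext x; simp [LinearMap.mem_range, Matrix.mulVecLin_apply]
          have hcl : IsClosed ((LinearMap.range (Matrix.mulVecLin Λ) :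
              Submodule ℝ (Fin n → ℝ)) : Set (Fin n → ℝ)) :=
            Submodule.closed_of_finiteDimensional _
          rw [hr]
          exact hcl.preimage (continuous_fst.comp continuous_snd)
        have e5 : IsClosed {p : ℝ × (Fin n → ℝ) × (Fin n → ℝ) | V ≤ ‖p.2.1‖} :=
          isClosed_le continuous_const (continuous_norm.comp (continuous_fst.comp continuous_snd))
        have e6 : IsClosed {p : ℝ × (Fin n → ℝ) × (Fin n → ℝ) | ‖p.2.1‖ ≤ W} :=
          isClosed_le (continuous_norm.comp (continuous_fst.comp continuous_snd)) continuous_const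
        have e7 : IsClosed {p : ℝ × (Fin n → ℝ) × (Fin n → ℝ) | ∀ v, ∃ m : ℤ, p.2.2 v = (m : ℝ)} := by
          have : {p : ℝ × (Fin n → ℝ) × (Fin n → ℝ) | ∀ v, ∃ m : ℤ, p.2.2 v = (m : ℝ)}
              = ⋂ v, (fun p : ℝ × (Fin n → ℝ) × (Fin n → ℝ) => p.2.2 v) ⁻¹'
                  (Set.range ((↑) : ℤ → ℝ)) := by
            ext p; simp [eq_comm]
          rw [this]
          exact isClosed_iInter fun v =>
            Int.isClosedEmbedding_coe_real.isClosed_range.preimage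
              ((continuous_apply v).comp (continuous_snd.comp continuous_snd))
        have e8 : IsClosed {p : ℝ × (Fin n → ℝ) × (Fin n → ℝ) |
            ∀ v, |p.2.2 v| ≤ (ε / 2)⁻¹ * W + 1} := by
          have : {p : ℝ × (Fin n → ℝ) × (Fin n → ℝ) | ∀ v, |p.2.2 v| ≤ (ε / 2)⁻¹ * W + 1}
              = ⋂ v, {p : ℝ × (Fin n → ℝ) × (Fin n → ℝ) | |p.2.2 v| ≤ (ε / 2)⁻¹ * W + 1} := by
            ext p; simp
          rw [this]
          exact isClosed_iInter fun v => isClosed_le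
            (((continuous_apply v).comp (continuous_snd.comp continuous_snd)).abs)
            continuous_const
        have : C = {p | ∃ m : ℤ, p.1 = (m : ℝ)} ∩ ({p | 1 ≤ p.1} ∩ ({p | p.1 ≤ (ε / 2)⁻¹} ∩
            ({p | p.2.1 ∈ Set.range Λ.mulVec} ∩ ({p | V ≤ ‖p.2.1‖} ∩ ({p | ‖p.2.1‖ ≤ W} ∩
            ({p | ∀ v, ∃ m : ℤ, p.2.2 v = (m : ℝ)} ∩
             {p | ∀ v, |p.2.2 v| ≤ (ε / 2)⁻¹ * W + 1})))))) := by
          ext p; simp only [hCdef, Set.mem_setOf_eq, Set.mem_inter_iff]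
        rw [this]
        exact e1.inter (e2.inter (e3.inter (e4.inter (e5.inter (e6.inter (e7.inter e8))))))
      have hbdd : Bornology.IsBounded C := by
        apply Bornology.IsBounded.subset (Metric.isBounded_closedBall
          (x := (0 : ℝ × (Fin n → ℝ) × (Fin n → ℝ)))
          (r := max (ε / 2)⁻¹ (max W ((ε / 2)⁻¹ * W + 1))))
        intro p hp
        obtain ⟨-, h2, h3, -, -, h6, -, h8⟩ := hp
        rw [Metric.mem_closedBall, dist_zero_right, Prod.norm_def, Prod.norm_def]
        have hb : ‖p.2.2‖ ≤ (ε / 2)⁻¹ * W + 1 := by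
          have hi : (0:ℝ) < (ε / 2)⁻¹ := by positivity
          have hBnn : (0:ℝ) ≤ (ε / 2)⁻¹ * W + 1 := by nlinarith
          exact (pi_norm_le_iff_of_nonneg hBnn).2 fun v => by
            rw [Real.norm_eq_abs]; exact h8 v
        have h1 : ‖p.1‖ ≤ (ε / 2)⁻¹ := by rw [Real.norm_eq_abs, abs_of_nonneg (by linarith)]; exact h3
        apply max_le (h1.trans (le_max_left _ _))
        exact max_le (h6.trans ((le_max_left _ _).trans (le_max_right _ _)))
          (hb.trans ((le_max_right _ _).trans (le_max_right _ _)))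
      have hcompact : IsCompact C := Metric.isCompact_of_isClosed_isBounded hclosed hbdd
      have hcont : ContinuousOn
          (fun p : ℝ × (Fin n → ℝ) × (Fin n → ℝ) => ‖p.1 • p.2.1 - p.2.2‖) C := by
        fun_prop
      obtain ⟨x, hxC, hxmin⟩ := hcompact.exists_isMinOn hC hcont
      refine ⟨‖x.1 • x.2.1 - x.2.2‖, ?_, fun p hp => hxmin hp⟩
      rw [gt_iff_lt, norm_pos_iff]
      intro hzero
      obtain ⟨⟨m, hm⟩, hx1, h3, ⟨α, hα⟩, h5, h6, h7, h8⟩ := hxC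
      have hα0 : α ≠ 0 := by
        intro h0
        rw [h0, Matrix.mulVec_zero] at hα
        rw [← hα, norm_zero] at h5
        linarith
      apply hirr α hα0
      intro i
      obtain ⟨b, hb⟩ := h7 i
      have hx1ne : x.1 ≠ 0 := by intro h0; rw [h0] at hx1; linarith
      have heq : x.1 * x.2.1 i = x.2.2 i := by
        have := congrFun (sub_eq_zero.mp hzero) i
        simpa [Pi.smul_apply, smul_eq_mul] using this
      have hmne : (m : ℝ) ≠ 0 := by rw [← hm]; exact hx1ne
      have hmZ : m ≠ 0 := by intro h0; rw [h0] at hm; norm_num at hm; rw [hm] at hx1; linarith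
      have hmq : (m : ℚ) ≠ 0 := Int.cast_ne_zero.mpr hmZ
      refine ⟨(b : ℚ) / (m : ℚ), ?_⟩
      have hval : x.2.1 i = (b : ℝ) / (m : ℝ) := by
        rw [← hb, ← hm, eq_div_iff hx1ne, mul_comm]
        exact heq
      rw [hα, hval]
      push_cast
      ring
  -- choose the threshold
  refine ⟨max 1 (max (ε / 2)⁻¹ ((δ * (ε / 2))⁻¹)), fun P hP => ?_⟩
  have hP1 : (1 : ℝ) ≤ P := le_trans (le_max_left _ _) hP
  have hP0 : (0 : ℝ) ≤ P := by linarith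
  have hPinv : (ε / 2)⁻¹ ≤ P := le_trans ((le_max_left _ _).trans (le_max_right _ _)) hP
  have hPδ : (δ * (ε / 2))⁻¹ ≤ P := le_trans ((le_max_right _ _).trans (le_max_right _ _)) hP
  -- key pointwise bound
  have key : ∀ (α : {α : Fin r → ℝ // V ≤ ‖Λ.mulVec α‖ ∧ ‖Λ.mulVec α‖ ≤ W})
      (q : ℕ+) (a : Fin n → ℤ),
      ∏ v : Fin n, ((q : ℝ) + P * |(q : ℝ) * Λ.mulVec α.val v - (a v : ℝ)|)⁻¹ ≤ ε / 2 := by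
    intro α q a
    set lam := Λ.mulVec α.val with hlam
    obtain ⟨hαV, hαW⟩ := α.property
    have hqr : (1:ℝ) ≤ (q:ℝ) := by exact_mod_cast q.one_le
    have v₀ : Fin n := ⟨0, hn⟩
    by_cases hq : (q : ℝ) ≤ (ε / 2)⁻¹
    · by_cases ha : ∀ v, |(a v : ℝ)| ≤ (q : ℝ) * W + 1
      · -- typical case: use the compactness bound
        have hmem : ((q : ℝ), lam, fun v => ((a v : ℝ))) ∈ C := by
          refine ⟨⟨(q : ℤ), by push_cast; ring⟩, hqr, hq, ⟨α.val, rfl⟩, hαV, hαW,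
            fun v => ⟨a v, rfl⟩, fun v => ?_⟩
          exact (ha v).trans (by nlinarith)
        have hdist := hδC _ hmem
        have hex : ∃ v, δ ≤ |(q : ℝ) * lam v - (a v : ℝ)| := by
          by_contra hcon
          push_neg at hcon
          have : ‖(q : ℝ) • lam - fun v => ((a v : ℝ))‖ < δ := by
            rw [pi_norm_lt_iff hδ]
            intro v
            simpa [Real.norm_eq_abs, smul_eq_mul] using hcon v
          linarith
        obtain ⟨v₁, hv₁⟩ := hex
        have hM : (0:ℝ) < P * δ := by nlinarith
        have hfac : P * δ ≤ (q : ℝ) + P * |(q : ℝ) * lam v₁ - (a v₁ : ℝ)| := by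
          nlinarith [mul_le_mul_of_nonneg_left hv₁ hP0]
        refine le_trans (bgf_prod_inv_le P hP0 q lam a v₁ (P * δ) hM hfac) ?_
        have h1 : (ε / 2)⁻¹ ≤ P * δ := by
          have h2 : (δ * (ε / 2))⁻¹ * δ = (ε / 2)⁻¹ := by field_simp
          nlinarith
        exact inv_le_of_inv_le₀ hε2 h1
      · -- some aᵥ is large
        push_neg at ha
        obtain ⟨v₁, hv₁⟩ := ha
        have hlamv : |lam v₁| ≤ W := (norm_le_pi_norm lam v₁).trans hαW
        have hfac : P ≤ (q : ℝ) + P * |(q : ℝ) * lam v₁ - (a v₁ : ℝ)| := by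
          have h3 := abs_sub_abs_le_abs_sub ((a v₁ : ℝ)) ((q : ℝ) * lam v₁)
          rw [abs_sub_comm] at h3
          have h2 : |(q : ℝ) * lam v₁| ≤ (q : ℝ) * W := by
            rw [abs_mul, abs_of_nonneg (by linarith)]
            nlinarith
          have h1 : (1:ℝ) ≤ |(q : ℝ) * lam v₁ - (a v₁ : ℝ)| := by linarith
          nlinarith
        refine le_trans (bgf_prod_inv_le P hP0 q lam a v₁ P (by linarith) hfac) ?_
        exact inv_le_of_inv_le₀ hε2 hPinv
    · -- q is large
      push_neg at hq
      have hfac : (q : ℝ) ≤ (q : ℝ) + P * |(q : ℝ) * lam v₀ - (a v₀ : ℝ)| :=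
        le_add_of_nonneg_right (mul_nonneg hP0 (abs_nonneg _))
      refine le_trans (bgf_prod_inv_le P hP0 q lam a v₀ (q : ℝ) (by linarith) hfac) ?_
      exact inv_le_of_inv_le₀ hε2 hq.le
  -- nonnegativity of each factor product
  have hnonneg : ∀ (α : {α : Fin r → ℝ // V ≤ ‖Λ.mulVec α‖ ∧ ‖Λ.mulVec α‖ ≤ W})
      (q : ℕ+) (a : Fin n → ℤ),
      0 ≤ ∏ v : Fin n, ((q : ℝ) + P * |(q : ℝ) * Λ.mulVec α.val v - (a v : ℝ)|)⁻¹ := by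
    intro α q a
    apply Finset.prod_nonneg
    intro v _
    have hqr : (0:ℝ) ≤ (q:ℝ) := by positivity
    have := mul_nonneg hP0 (abs_nonneg ((q : ℝ) * Λ.mulVec α.val v - (a v : ℝ)))
    positivity
  have hsup_le : (⨆ α : {α : Fin r → ℝ // V ≤ ‖Λ.mulVec α‖ ∧ ‖Λ.mulVec α‖ ≤ W},
      calF n (Λ.mulVec α.val) P) ≤ ε / 2 := by
    apply Real.iSup_le _ hε2.le
    intro α
    rw [calF]
    exact Real.iSup_le (fun q => Real.iSup_le (fun a => key α q a) hε2.le) hε2.le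
  have hsup_nonneg : 0 ≤ ⨆ α : {α : Fin r → ℝ // V ≤ ‖Λ.mulVec α‖ ∧ ‖Λ.mulVec α‖ ≤ W},
      calF n (Λ.mulVec α.val) P := by
    apply Real.iSup_nonneg
    intro α
    rw [calF]
    exact Real.iSup_nonneg fun q => Real.iSup_nonneg fun a => hnonneg α q a
  rw [Real.dist_eq, sub_zero, abs_of_nonneg hsup_nonneg]
  linarith
end
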